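/- Let C ⊆ F_{q^m}^n be a linear rank-metric code of dimension k over F_{q^m} (1 ≤ k ≤ n) with generator matrix G ∈ F_{q^m}^{k×n}. Then C is an MRD code if and only if for every k×n matrix V with entries in F_q whose rank over F_q equals k, the k×k matrix V·G^T (computed over F_{q^m}, viewing the entries of V inside F_{q^m}) has rank k over F_{q^m}, i.e. is invertible. -/

import Mathlib

open Matrix

/-- The rank over the subfield `Fq` of a vector with entries in `K`:
the `Fq`-dimension of the `Fq`-span of its coordinates. -/
noncomputable def rankQ (Fq : Type) {K : Type} [Field Fq] [Field K] [Algebra Fq K] {n : ℕ}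
    (v : Fin n → K) : ℕ :=
  Module.finrank Fq (Submodule.span Fq (Set.range v))

/-- The minimum rank distance of a linear rank-metric code `C ⊆ K^n`. -/
noncomputable def minRankDist (Fq : Type) {K : Type} [Field Fq] [Field K] [Algebra Fq K] {n : ℕ}
    (C : Submodule K (Fin n → K)) : ℕ :=
  sInf (rankQ Fq '' {c : Fin n → K | c ∈ C ∧ c ≠ 0})

/-- A linear code `C ⊆ K^n` of dimension `k` over `K` is MRD if its minimum
rank distance equals `n - k + 1`. -/
def IsMRD (Fq : Type) {K : Type} [Field Fq] [Field K] [Algebra Fq K] {n : ℕ}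
    (C : Submodule K (Fin n → K)) (k : ℕ) : Prop :=
  Module.finrank K C = k ∧ minRankDist Fq C = n - k + 1

/-- `G` is a generator matrix of `C`: its rows form a `K`-basis of `C`. -/
def IsGenMat {K : Type} [Field K] {k n : ℕ} (C : Submodule K (Fin n → K))
    (G : Matrix (Fin k) (Fin n) K) : Prop :=
  LinearIndependent K (fun i => G i) ∧ Submodule.span K (Set.range fun i => G i) = C

/-- Rank-nullity for the coefficient map of a vector. -/
theorem rankQ_add_ker (Fq : Type) {K : Type} [Field Fq] [Field K] [Algebra Fq K] {n : ℕ}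
    (c : Fin n → K) :
    rankQ Fq c + Module.finrank Fq (LinearMap.ker (Fintype.linearCombination Fq c)) = n := by
  have := LinearMap.finrank_range_add_finrank_ker (Fintype.linearCombination Fq c)
  rw [Fintype.range_linearCombination, Module.finrank_fin_fun] at this
  exact this

/-- Singleton-bound-type existence: a nonzero codeword of rank at most `n - k + 1`. -/
theorem exists_low_rank (Fq : Type) {K : Type} [Field Fq] [Field K] [Algebra Fq K]
    [FiniteDimensional Fq K] {n k : ℕ} (hk : 1 ≤ k) (hkn : k ≤ n)
    (C : Submodule K (Fin n → K)) (hC : Module.finrank K C = k) :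
    ∃ c ∈ C, c ≠ 0 ∧ rankQ Fq c ≤ n - k + 1 := by
  -- projection onto the last k-1 coordinates
  have hidx : ∀ j : Fin (k - 1), n - k + 1 + (j : ℕ) < n := by
    intro j; have := j.2; omega
  set π : C →ₗ[K] (Fin (k - 1) → K) :=
    LinearMap.pi (fun j => (LinearMap.proj (⟨n - k + 1 + (j : ℕ), hidx j⟩ : Fin n)).comp
      C.subtype) with hπ
  have hker : LinearMap.ker π ≠ ⊥ := by
    intro hbot
    have h1 := LinearMap.finrank_range_add_finrank_ker π
    rw [hbot, finrank_bot, hC] at h1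
    have h2 : Module.finrank K (LinearMap.range π) ≤ Module.finrank K (Fin (k - 1) → K) :=
      Submodule.finrank_le _
    rw [Module.finrank_fin_fun] at h2
    omega
  obtain ⟨c, hcker, hc0⟩ := (Submodule.ne_bot_iff _).mp hker
  refine ⟨(c : Fin n → K), c.2, ?_, ?_⟩
  · simpa [Submodule.coe_eq_zero] using hc0
  · -- coordinates beyond n-k+1 vanish
    have hzero : ∀ i : Fin n, n - k + 1 ≤ (i : ℕ) → (c : Fin n → K) i = 0 := by
      intro i hi
      have hj : (i : ℕ) - (n - k + 1) < k - 1 := by have := i.2; omega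
      have := congrFun (LinearMap.mem_ker.mp hcker) ⟨(i : ℕ) - (n - k + 1), hj⟩
      simp only [hπ, LinearMap.pi_apply, LinearMap.comp_apply, LinearMap.proj_apply,
        Submodule.coe_subtype, Pi.zero_apply] at this
      convert this using 2
      ext
      simp; omega
    have hle : n - k + 1 ≤ n := by omega
    set w : Fin (n - k + 1) → K := fun j => (c : Fin n → K) (Fin.castLE hle j) with hw
    have hsub : Set.range (c : Fin n → K) ⊆ insert 0 (Set.range w) := by
      rintro x ⟨i, rfl⟩
      by_cases hi : (i : ℕ) < n - k + 1
      · right; exact ⟨⟨(i : ℕ), hi⟩, by simp [hw, Fin.castLE]⟩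
      · left; exact hzero i (by omega)
    calc rankQ Fq (c : Fin n → K)
        ≤ Module.finrank Fq (Submodule.span Fq (insert 0 (Set.range w))) := by
          apply Submodule.finrank_mono
          exact Submodule.span_mono hsub
      _ = Module.finrank Fq (Submodule.span Fq (Set.range w)) := by
          rw [Submodule.span_insert_zero]
      _ ≤ n - k + 1 := by
          have := finrank_range_le_card (R := Fq) w
          rw [Fintype.card_fin] at this
          exact this

/-- `C` is MRD iff `V * Gᵀ` is invertible for every full-rank
`k × n` matrix `V` over `F_q`. -/
theorem stmt0 {q m n k : ℕ} (Fq K : Type) [Field Fq] [Fintype Fq] [Field K] [Fintype K]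
    [Algebra Fq K] (hq : Fintype.card Fq = q) (hK : Fintype.card K = q ^ m)
    (hk : 1 ≤ k) (hkn : k ≤ n)
    (C : Submodule K (Fin n → K)) (G : Matrix (Fin k) (Fin n) K) (hG : IsGenMat C G) :
    IsMRD Fq C k ↔
      ∀ V : Matrix (Fin k) (Fin n) Fq, V.rank = k →
        IsUnit ((V.map (algebraMap Fq K)) * G.transpose).det := by
  obtain ⟨hGind, hGspan⟩ := hG
  have hfinC : Module.finrank K C = k := by
    rw [← hGspan, finrank_span_eq_card hGind, Fintype.card_fin]
  -- key computation : for x : Fin k → K and the codeword c = x ᵥ* G,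
  -- ((V.map alg) * Gᵀ) *ᵥ x = fun j => linearCombination of c at row j of V
  have key : ∀ (V : Matrix (Fin k) (Fin n) Fq) (x : Fin k → K),
      ((V.map (algebraMap Fq K)) * G.transpose) *ᵥ x
        = fun j => Fintype.linearCombination Fq (x ᵥ* G) (V j) := by
    intro V x
    funext j
    rw [← Matrix.mulVec_mulVec, Matrix.mulVec_transpose]
    simp [Matrix.mulVec, dotProduct, Fintype.linearCombination_apply,
      Algebra.smul_def]
  -- membership of x ᵥ* G in C and characterization of codewords
  have hmem : ∀ x : Fin k → K, x ᵥ* G ∈ C := by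
    intro x
    rw [← hGspan]
    rw [Submodule.mem_span_range_iff_exists_fun]
    exact ⟨x, by funext j; simp [Matrix.vecMul, dotProduct, Finset.sum_apply]⟩
  have hrepr : ∀ c ∈ C, ∃ x : Fin k → K, x ᵥ* G = c := by
    intro c hc
    rw [← hGspan, Submodule.mem_span_range_iff_exists_fun] at hc
    obtain ⟨x, hx⟩ := hc
    exact ⟨x, by rw [← hx]; funext j; simp [Matrix.vecMul, dotProduct, Finset.sum_apply]⟩
  have hne : ∀ x : Fin k → K, x ≠ 0 → x ᵥ* G ≠ 0 := by
    intro x hx h0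
    apply hx
    have : ∑ i, x i • G i = 0 := by
      funext j
      have := congrFun h0 j
      simpa [Matrix.vecMul, dotProduct, Finset.sum_apply] using this
    have := Fintype.linearIndependent_iff.mp hGind x this
    funext i; exact this i
  constructor
  · rintro ⟨-, hdist⟩ V hV
    rw [isUnit_iff_ne_zero]
    intro hdet
    obtain ⟨x, hx0, hMx⟩ := (Matrix.exists_mulVec_eq_zero_iff).mpr hdet
    set c := x ᵥ* G with hc
    have hcC : c ∈ C := hmem x
    have hc0 : c ≠ 0 := hne x hx0
    -- rows of V lie in the kernel
    have hrows : ∀ j, V j ∈ LinearMap.ker (Fintype.linearCombination Fq c) := by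
      intro j
      have := congrFun ((key V x).symm.trans hMx) j
      simpa using this
    -- rows of V are independent
    have hVind : LinearIndependent Fq (fun i => V i) := by
      rw [linearIndependent_iff_card_eq_finrank_span]
      rw [Matrix.rank_eq_finrank_span_row] at hV
      rw [Fintype.card_fin, Set.finrank]; exact hV.symm
    have hspan : Submodule.span Fq (Set.range fun i => V i)
        ≤ LinearMap.ker (Fintype.linearCombination Fq c) := by
      rw [Submodule.span_le]; rintro v ⟨j, rfl⟩; exact hrows j
    have hkle : k ≤ Module.finrank Fq (LinearMap.ker (Fintype.linearCombination Fq c)) := by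
      have h1 := Submodule.finrank_mono hspan
      rwa [finrank_span_eq_card hVind, Fintype.card_fin] at h1
    have hrk := rankQ_add_ker Fq c
    have hlow : rankQ Fq c ≤ n - k := by omega
    have : minRankDist Fq C ≤ rankQ Fq c :=
      Nat.sInf_le ⟨c, ⟨hcC, hc0⟩, rfl⟩
    rw [hdist] at this
    omega
  · intro h
    refine ⟨hfinC, ?_⟩
    -- every nonzero codeword has rank ≥ n - k + 1
    have hlb : ∀ c ∈ C, c ≠ 0 → n - k + 1 ≤ rankQ Fq c := by
      intro c hcC hc0
      by_contra hlt
      push_neg at hlt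
      have hrk := rankQ_add_ker Fq c
      have hkd : k ≤ Module.finrank Fq (LinearMap.ker (Fintype.linearCombination Fq c)) := by
        omega
      -- pick k independent kernel vectors
      set N := LinearMap.ker (Fintype.linearCombination Fq c) with hN
      let b := Module.finBasis Fq N
      have hcard : k ≤ Module.finrank Fq N := hkd
      set V : Matrix (Fin k) (Fin n) Fq := fun i => (b (Fin.castLE hcard i) : Fin n → Fq)
        with hVdef
      have hVind : LinearIndependent Fq (fun i => V i) := by
        have h1 : LinearIndependent Fq (fun i : Fin k => b (Fin.castLE hcard i)) :=
          b.linearIndependent.comp _ (Fin.castLE_injective hcard)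
        exact h1.map' N.subtype (Submodule.ker_subtype N)
      have hVrank : V.rank = k := by
        rw [hVind.rank_matrix, Fintype.card_fin]
      have hdet := h V hVrank
      obtain ⟨x, hx⟩ := hrepr c hcC
      have hx0 : x ≠ 0 := by rintro rfl; apply hc0; rw [← hx]; funext j;
                             simp [Matrix.vecMul, dotProduct]
      have hMx : ((V.map (algebraMap Fq K)) * G.transpose) *ᵥ x = 0 := by
        rw [key V x, hx]
        funext j
        have : V j ∈ N := (b (Fin.castLE hcard j)).2
        simpa using LinearMap.mem_ker.mp this
      have : ((V.map (algebraMap Fq K)) * G.transpose).det = 0 :=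
        (Matrix.exists_mulVec_eq_zero_iff).mp ⟨x, hx0, hMx⟩
      rw [this] at hdet
      exact not_isUnit_zero hdet
    -- existence of a codeword of rank exactly n - k + 1
    obtain ⟨c₀, hc₀C, hc₀0, hc₀le⟩ := exists_low_rank Fq hk hkn C hfinC
    have hc₀eq : rankQ Fq c₀ = n - k + 1 :=
      le_antisymm hc₀le (hlb c₀ hc₀C hc₀0)
    have hmemS : (n - k + 1) ∈ rankQ Fq '' {c : Fin n → K | c ∈ C ∧ c ≠ 0} :=
      ⟨c₀, ⟨hc₀C, hc₀0⟩, hc₀eq⟩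
    apply le_antisymm
    · exact Nat.sInf_le hmemS
    · apply le_csInf ⟨_, hmemS⟩
      rintro a ⟨c, ⟨hcC, hc0⟩, rfl⟩
      exact hlb c hcC hc0
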